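/- For a 2×2 density matrix ρ, the maximum of (1/2)‖[ρ,H]‖₁ over diagonal Hermitian H with operator norm ‖H‖_∞ ≤ 1 equals 2|ρ₁₂|, attained at H = |1⟩⟨1| − |2⟩⟨2|. -/

import Mathlib

open Matrix Complex
open scoped ComplexOrder

/-- Old Mathlib's `Matrix.PosSemidef.sqrt` (removed upstream), restated with its old definition. -/
noncomputable def Matrix.PosSemidef.sqrt {n 𝕜 : Type*} [Fintype n] [DecidableEq n] [RCLike 𝕜]
    {A : Matrix n n 𝕜} (hA : A.PosSemidef) : Matrix n n 𝕜 :=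
  (hA.1.eigenvectorUnitary : Matrix n n 𝕜) * diagonal ((↑) ∘ Real.sqrt ∘ hA.1.eigenvalues) *
    (star (hA.1.eigenvectorUnitary : Matrix n n 𝕜))

/-- Trace norm `‖A‖₁ = tr √(AᴴA)`. -/
noncomputable def traceNorm {d : ℕ} (A : Matrix (Fin d) (Fin d) ℂ) : ℝ :=
  ((Matrix.posSemidef_conjTranspose_mul_self A).sqrt).trace.re

open scoped MatrixOrder in
lemma psd_eq_sqrt_of_sq_eq {n : Type*} [Fintype n] [DecidableEq n] {A B : Matrix n n ℂ}
    (hA : A.PosSemidef) (hB : B.PosSemidef) (hsq : A ^ 2 = B) : A = hB.sqrt := by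
  have h1 : hB.sqrt = CFC.sqrt B := by
    rw [CFC.sqrt_eq_real_sqrt B hB.nonneg, cfcₙ_eq_cfc, hB.1.cfc_eq, IsHermitian.cfc,
      Unitary.conjStarAlgAut_apply, Matrix.PosSemidef.sqrt]
  rw [h1, eq_comm, CFC.sqrt_eq_iff B A hB.nonneg hA.nonneg, ← sq, hsq]

lemma traceNorm_offdiag (M : Matrix (Fin 2) (Fin 2) ℂ) (h0 : M 0 0 = 0) (h1 : M 1 1 = 0) :
    traceNorm M = ‖M 0 1‖ + ‖M 1 0‖ := by
  set S : Matrix (Fin 2) (Fin 2) ℂ :=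
    Matrix.diagonal ![(‖M 1 0‖ : ℂ), (‖M 0 1‖ : ℂ)] with hS
  have hSpsd : S.PosSemidef := by
    refine Matrix.posSemidef_diagonal_iff.mpr fun i => ?_
    fin_cases i <;> simp [Complex.zero_le_real, norm_nonneg]
  have hsq : S ^ 2 = Mᴴ * M := by
    rw [pow_two]
    ext i j
    fin_cases i <;> fin_cases j <;>
      simp [hS, Matrix.mul_apply, Fin.sum_univ_two, Matrix.diagonal, h0, h1,
        Complex.mul_conj', Complex.mul_conj, Complex.sq_norm, ← Complex.normSq_eq_norm_sq,
        mul_comm, ← sq]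
  have heq := psd_eq_sqrt_of_sq_eq hSpsd (Matrix.posSemidef_conjTranspose_mul_self M) hsq
  rw [traceNorm, ← heq, hS]
  simp [Matrix.trace, Fin.sum_univ_two, add_comm]

lemma comm_value (ρ : Matrix (Fin 2) (Fin 2) ℂ) (hherm : ρ.IsHermitian) (h : Fin 2 → ℝ) :
    (1 / 2) * traceNorm
        (ρ * Matrix.diagonal (fun j => (h j : ℂ))
          - Matrix.diagonal (fun j => (h j : ℂ)) * ρ)
      = ‖ρ 0 1‖ * |h 0 - h 1| := by
  set M := ρ * Matrix.diagonal (fun j => (h j : ℂ))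
          - Matrix.diagonal (fun j => (h j : ℂ)) * ρ with hM
  have hent : ∀ i j, M i j = ρ i j * ((h j : ℂ) - (h i : ℂ)) := by
    intro i j
    fin_cases i <;> fin_cases j <;>
      simp [hM, Matrix.mul_apply, Fin.sum_univ_two, Matrix.diagonal] <;> ring
  have h10 : ρ 1 0 = star (ρ 0 1) := by rw [← hherm.apply 1 0]
  rw [traceNorm_offdiag M (by rw [hent]; ring) (by rw [hent]; ring), hent, hent, h10]
  rw [norm_mul, norm_mul]
  rw [show (star (ρ 0 1)) = (starRingEnd ℂ) (ρ 0 1) from rfl, Complex.norm_conj]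
  simp only [← Complex.ofReal_sub, Complex.norm_real, Real.norm_eq_abs, abs_sub_comm (h 0) (h 1)]
  ring

/-- For a qubit density matrix `ρ`, the maximum of `(1/2)‖[ρ,H]‖₁` over real
diagonal `H` with operator norm `‖H‖_∞ ≤ 1` (i.e. all diagonal entries of
modulus at most 1) equals `2|ρ₁₂|`, attained at `H = |1⟩⟨1| − |2⟩⟨2|`. -/
theorem qubit_gradient_op (ρ : Matrix (Fin 2) (Fin 2) ℂ)
    (hρ : ρ.PosSemidef) (htr : ρ.trace = 1) :
    IsGreatest {x : ℝ | ∃ h : Fin 2 → ℝ, (∀ j, |h j| ≤ 1) ∧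
        x = (1 / 2) * traceNorm
          (ρ * Matrix.diagonal (fun j => (h j : ℂ))
            - Matrix.diagonal (fun j => (h j : ℂ)) * ρ)}
      (2 * ‖ρ 0 1‖) ∧
    (1 / 2) * traceNorm
        (ρ * Matrix.diagonal ![(1 : ℂ), -1]
          - Matrix.diagonal ![(1 : ℂ), -1] * ρ)
      = 2 * ‖ρ 0 1‖ := by
  have hherm := hρ.1
  have hdiag : Matrix.diagonal ![(1 : ℂ), -1]
      = Matrix.diagonal (fun j => ((![1, -1] : Fin 2 → ℝ) j : ℂ)) := by
    ext i j; fin_cases i <;> fin_cases j <;> norm_num [Matrix.diagonal]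
  have hval : (1 / 2) * traceNorm
        (ρ * Matrix.diagonal ![(1 : ℂ), -1]
          - Matrix.diagonal ![(1 : ℂ), -1] * ρ)
      = 2 * ‖ρ 0 1‖ := by
    rw [hdiag, comm_value ρ hherm]
    norm_num [Matrix.cons_val_zero, Matrix.cons_val_one]
    ring
  refine ⟨⟨⟨![1, -1], fun j => by fin_cases j <;> simp, ?_⟩, ?_⟩, hval⟩
  · rw [← hdiag]; exact hval.symm
  · rintro x ⟨h, hb, rfl⟩
    rw [comm_value ρ hherm]
    have : |h 0 - h 1| ≤ 2 := by
      calc |h 0 - h 1| ≤ |h 0| + |h 1| := abs_sub _ _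
        _ ≤ 2 := by linarith [hb 0, hb 1]
    calc ‖ρ 0 1‖ * |h 0 - h 1| ≤ ‖ρ 0 1‖ * 2 :=
          mul_le_mul_of_nonneg_left this (norm_nonneg _)
      _ = 2 * ‖ρ 0 1‖ := by ring
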